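/- arXiv:1611.04074 — 6 statements merged into one kernel-verified Lean document; each statement's English description precedes it below -/
import Mathlib

section
/- Let n ≥ 1 and let f_1, …, f_n : ℝ^d → ℝ each be convex and L_i-smooth, let f = (1/n)·Σ_{i=1}^n f_i, and let L_Q = max_i L_i. Then for all points x̃, x ∈ ℝ^d, (1/n)·Σ_{i=1}^n ‖∇f_i(x) − ∇f_i(x̃) + ∇f(x̃) − ∇f(x)‖² ≤ 2·L_Q·( f(x̃) − f(x) − ⟨∇f(x), x̃ − x⟩ ). (This is the variance bound for the SVRG-style stochastic gradient v = ∇f_{i}(x) − ∇f_{i}(x̃) + ∇f(x̃) when i is sampled uniformly from {1,…,n}.) -/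
open RealInnerProductSpace

variable {E : Type*} [NormedAddCommGroup E] [InnerProductSpace ℝ E] [CompleteSpace E]

lemma line_hasDerivAt {g : E → ℝ} (hd : Differentiable ℝ g) (x y : E) (t : ℝ) :
    HasDerivAt (fun s : ℝ => g (x + s • (y - x))) ⟪gradient g (x + t • (y - x)), y - x⟫ t := by
  have h1 : HasDerivAt (fun s : ℝ => x + s • (y - x)) (y - x) t := by
    simpa using ((hasDerivAt_id t).smul_const (y - x)).const_add x
  have h2 : HasFDerivAt g (InnerProductSpace.toDual ℝ E (gradient g (x + t • (y - x))))
      (x + t • (y - x)) :=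
    hasGradientAt_iff_hasFDerivAt.mp (hd _).hasGradientAt
  refine (h2.comp_hasDerivAt t h1).congr_deriv ?_
  simp [InnerProductSpace.toDual_apply_apply]

lemma convex_lower {g : E → ℝ} (hc : ConvexOn ℝ Set.univ g) (hd : Differentiable ℝ g)
    (x y : E) : g x + ⟪gradient g x, y - x⟫ ≤ g y := by
  set φ : ℝ → ℝ := fun s => g (x + s • (y - x)) with hφ
  have hcφ : ConvexOn ℝ Set.univ φ := by
    have h := hc.comp_affineMap (AffineMap.lineMap x y)
    have heq : (g ∘ ⇑(AffineMap.lineMap x y)) = φ := by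
      funext s
      simp only [Function.comp_apply, AffineMap.lineMap_apply_module', φ]
      rw [add_comm]
    rw [heq] at h
    simpa using h
  have hderiv : HasDerivAt φ ⟪gradient g x, y - x⟫ 0 := by
    simpa using line_hasDerivAt hd x y 0
  have h := hcφ.le_slope_of_hasDerivAt (Set.mem_univ (0:ℝ)) (Set.mem_univ (1:ℝ))
    one_pos hderiv
  rw [slope_def_field] at h
  have h0 : φ 0 = g x := by simp [φ]
  have h1 : φ 1 = g y := by simp [φ]
  rw [h0, h1] at h
  linarith [h]

lemma descent {g : E → ℝ} (hd : Differentiable ℝ g) {L : ℝ}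
    (hs : ∀ u v, ‖gradient g u - gradient g v‖ ≤ L * ‖u - v‖) (x y : E) :
    g y ≤ g x + ⟪gradient g x, y - x⟫ + L / 2 * ‖y - x‖ ^ 2 := by
  set c : ℝ := ⟪gradient g x, y - x⟫ with hc
  set K : ℝ := ‖y - x‖ ^ 2 with hK
  set ψ : ℝ → ℝ := fun s => g (x + s • (y - x)) - s * c - L * s ^ 2 / 2 * K with hψ
  have hψd : ∀ t : ℝ, HasDerivAt ψ (⟪gradient g (x + t • (y - x)), y - x⟫ - c - L * t * K) t := by
    intro t
    have h1 := line_hasDerivAt hd x y t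
    have h2 : HasDerivAt (fun s : ℝ => s * c) c t := by simpa using (hasDerivAt_id t).mul_const c
    have h3 : HasDerivAt (fun s : ℝ => L * s ^ 2 / 2 * K) (L * t * K) t := by
      have h4 := (((hasDerivAt_pow 2 t).const_mul L).div_const 2).mul_const K
      refine h4.congr_deriv ?_
      rw [show (2:ℕ) - 1 = 1 from rfl, pow_one]
      push_cast
      ring
    exact (h1.sub h2).sub h3
  have key : ∀ t ∈ interior (Set.Icc (0:ℝ) 1), deriv ψ t ≤ 0 := by
    intro t ht
    rw [interior_Icc, Set.mem_Ioo] at ht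
    rw [(hψd t).deriv]
    have hb : ⟪gradient g (x + t • (y - x)) - gradient g x, y - x⟫ ≤ L * t * K := by
      calc ⟪gradient g (x + t • (y - x)) - gradient g x, y - x⟫
          ≤ ‖gradient g (x + t • (y - x)) - gradient g x‖ * ‖y - x‖ := real_inner_le_norm _ _
        _ ≤ (L * ‖(x + t • (y - x)) - x‖) * ‖y - x‖ :=
            mul_le_mul_of_nonneg_right (hs _ _) (norm_nonneg _)
        _ = L * t * K := by
            rw [add_sub_cancel_left, norm_smul, hK]
            simp [abs_of_pos ht.1]
            ring
    rw [inner_sub_left] at hb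
    linarith
  have hanti : AntitoneOn ψ (Set.Icc (0:ℝ) 1) :=
    antitoneOn_of_deriv_nonpos (convex_Icc 0 1)
      (fun t _ => (hψd t).continuousAt.continuousWithinAt)
      (fun t _ => (hψd t).differentiableAt.differentiableWithinAt) key
  have h01 : ψ 1 ≤ ψ 0 := hanti (Set.left_mem_Icc.mpr zero_le_one)
    (Set.right_mem_Icc.mpr zero_le_one) zero_le_one
  have h0 : ψ 0 = g x := by simp [hψ]
  have h1 : ψ 1 = g y - c - L / 2 * K := by
    simp [hψ]
  rw [h0, h1] at h01
  linarith

lemma cocoercive {g : E → ℝ} (hc : ConvexOn ℝ Set.univ g) (hd : Differentiable ℝ g)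
    {L : ℝ} (hL : 0 ≤ L) (hs : ∀ u v, ‖gradient g u - gradient g v‖ ≤ L * ‖u - v‖) (x y : E) :
    ‖gradient g y - gradient g x‖ ^ 2 ≤ 2 * L * (g y - g x - ⟪gradient g x, y - x⟫) := by
  rcases eq_or_lt_of_le hL with h0 | hLpos
  · have hw : gradient g y - gradient g x = 0 := by
      have h := hs y x
      rw [← h0, zero_mul] at h
      exact norm_le_zero_iff.mp h
    rw [hw, ← h0]
    simp
  · set w := gradient g y - gradient g x with hwdef
    set z := y - L⁻¹ • w with hzdef
    have hA := convex_lower hc hd x z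
    have hB := descent hd hs y z
    have hzy : z - y = -(L⁻¹ • w) := by rw [hzdef]; abel
    have hzx : z - x = (y - x) - L⁻¹ • w := by rw [hzdef]; abel
    have e1 : ⟪gradient g y, z - y⟫ = -(L⁻¹ * ⟪gradient g y, w⟫) := by
      rw [hzy, inner_neg_right, real_inner_smul_right]
    have e2 : ‖z - y‖ ^ 2 = L⁻¹ ^ 2 * ‖w‖ ^ 2 := by
      rw [hzy, norm_neg, norm_smul, mul_pow, Real.norm_eq_abs, sq_abs]
    have e3 : ⟪gradient g x, z - x⟫ = ⟪gradient g x, y - x⟫ - L⁻¹ * ⟪gradient g x, w⟫ := by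
      rw [hzx, inner_sub_right, real_inner_smul_right]
    have e4 : ⟪gradient g y, w⟫ - ⟪gradient g x, w⟫ = ‖w‖ ^ 2 := by
      rw [← inner_sub_left, ← hwdef]
      exact real_inner_self_eq_norm_sq w
    rw [e1, e2] at hB
    rw [e3] at hA
    have e5 : L / 2 * (L⁻¹ ^ 2 * ‖w‖ ^ 2) = L⁻¹ * ‖w‖ ^ 2 / 2 := by
      field_simp
    rw [e5] at hB
    have e4' : L⁻¹ * ⟪gradient g y, w⟫ - L⁻¹ * ⟪gradient g x, w⟫ = L⁻¹ * ‖w‖ ^ 2 := by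
      rw [← mul_sub, e4]
    have key : L⁻¹ * ‖w‖ ^ 2 / 2 ≤ g y - g x - ⟪gradient g x, y - x⟫ := by linarith
    have h2L : (0:ℝ) ≤ 2 * L := by linarith
    have hfin := mul_le_mul_of_nonneg_left key h2L
    have e6 : 2 * L * (L⁻¹ * ‖w‖ ^ 2 / 2) = ‖w‖ ^ 2 := by
      field_simp
    linarith

/-- Variance bound for the SVRG-style stochastic gradient. -/
theorem stmt_0 (d n : ℕ) (hn : 1 ≤ n)
    (f : Fin n → EuclideanSpace ℝ (Fin d) → ℝ) (L : Fin n → ℝ)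
    (hconv : ∀ i, ConvexOn ℝ Set.univ (f i))
    (hdiff : ∀ i, Differentiable ℝ (f i))
    (hsmooth : ∀ i, ∀ u v, ‖gradient (f i) u - gradient (f i) v‖ ≤ L i * ‖u - v‖)
    (F : EuclideanSpace ℝ (Fin d) → ℝ)
    (hF : F = fun x => (1 / (n : ℝ)) * ∑ i, f i x)
    (LQ : ℝ)
    (hLQ : LQ = Finset.univ.sup' (Finset.univ_nonempty_iff.mpr ⟨⟨0, hn⟩⟩) L)
    (xt x : EuclideanSpace ℝ (Fin d)) :
    (1 / (n : ℝ)) *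
        ∑ i, ‖gradient (f i) x - gradient (f i) xt + gradient F xt - gradient F x‖ ^ 2
      ≤ 2 * LQ * (F xt - F x - ⟪gradient F x, xt - x⟫) := by
  rcases subsingleton_or_nontrivial (EuclideanSpace ℝ (Fin d)) with hsub | hnt
  · have hxx : xt = x := Subsingleton.elim xt x
    subst hxx
    simp
  -- nontrivial case
  have hn0 : (n : ℝ) ≠ 0 := Nat.cast_ne_zero.mpr (by omega)
  obtain ⟨u, v, huv⟩ := exists_pair_ne (EuclideanSpace ℝ (Fin d))
  have hLi : ∀ i, 0 ≤ L i := by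
    intro i
    have h1 : (0:ℝ) ≤ L i * ‖u - v‖ := (norm_nonneg _).trans (hsmooth i u v)
    have h2 : (0:ℝ) < ‖u - v‖ := by
      rw [norm_pos_iff, sub_ne_zero]; exact huv
    nlinarith [h1, h2]
  have hLile : ∀ i, L i ≤ LQ := fun i => hLQ ▸ Finset.le_sup' L (Finset.mem_univ i)
  have hLQ0 : 0 ≤ LQ := (hLi ⟨0, hn⟩).trans (hLile ⟨0, hn⟩)
  -- gradient of F
  have hgF : ∀ z, HasGradientAt F ((1 / (n:ℝ)) • ∑ i, gradient (f i) z) z := by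
    intro z
    rw [hasGradientAt_iff_hasFDerivAt]
    have h1 : HasFDerivAt (fun x => ∑ i, f i x)
        (∑ i, InnerProductSpace.toDual ℝ _ (gradient (f i) z)) z :=
      HasFDerivAt.fun_sum (fun i _ => hasGradientAt_iff_hasFDerivAt.mp ((hdiff i) z).hasGradientAt)
    have h2 := h1.const_mul ((1:ℝ)/n)
    rw [hF]
    refine h2.congr_fderiv ?_
    rw [map_smul, map_sum]
  have hgFz : ∀ z, gradient F z = (1 / (n:ℝ)) • ∑ i, gradient (f i) z :=
    fun z => (hgF z).gradient
  set a : Fin n → EuclideanSpace ℝ (Fin d) := fun i => gradient (f i) x - gradient (f i) xt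
    with ha
  set b : EuclideanSpace ℝ (Fin d) := gradient F x - gradient F xt with hb
  have hbval : b = (1 / (n:ℝ)) • ∑ i, a i := by
    rw [hb, hgFz, hgFz, ← smul_sub, ← Finset.sum_sub_distrib]
  have hrw : ∀ i, gradient (f i) x - gradient (f i) xt + gradient F xt - gradient F x
      = a i - b := by
    intro i; rw [ha, hb]; dsimp only; abel
  have hSa : ∑ i, a i = (n:ℝ) • b := by
    rw [hbval, smul_smul]
    rw [mul_one_div, div_self hn0, one_smul]
  have hinner : ∑ i, ⟪a i, b⟫ = (n:ℝ) * ‖b‖ ^ 2 := by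
    rw [← sum_inner, hSa, real_inner_smul_left, real_inner_self_eq_norm_sq]
  -- variance inequality
  have hvar : ∑ i, ‖a i - b‖ ^ 2 ≤ ∑ i, ‖a i‖ ^ 2 := by
    have hexp : ∑ i, ‖a i - b‖ ^ 2
        = ∑ i, ‖a i‖ ^ 2 - 2 * ((n:ℝ) * ‖b‖ ^ 2) + (n:ℝ) * ‖b‖ ^ 2 := by
      rw [← hinner]
      rw [Finset.sum_congr rfl (fun i _ => @norm_sub_sq_real _ _ _ (a i) b)]
      rw [Finset.sum_add_distrib, Finset.sum_sub_distrib, ← Finset.mul_sum,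
        Finset.sum_const, Finset.card_univ, Fintype.card_fin, nsmul_eq_mul]
      ring_nf
      rw [← sum_inner, hSa, real_inner_smul_left, real_inner_self_eq_norm_sq]
      ring
    have hnb : 0 ≤ (n:ℝ) * ‖b‖ ^ 2 := by positivity
    linarith
  -- per-term bound
  set D : Fin n → ℝ := fun i => f i xt - f i x - ⟪gradient (f i) x, xt - x⟫ with hD
  have hD0 : ∀ i, 0 ≤ D i := by
    intro i
    have := convex_lower (hconv i) (hdiff i) x xt
    rw [hD]; dsimp only; linarith
  have hai : ∀ i, ‖a i‖ ^ 2 ≤ 2 * LQ * D i := by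
    intro i
    have h1 := cocoercive (hconv i) (hdiff i) (hLi i) (hsmooth i) x xt
    have h2 : ‖a i‖ = ‖gradient (f i) xt - gradient (f i) x‖ := by rw [ha]; exact norm_sub_rev _ _
    have h3 : 2 * L i * D i ≤ 2 * LQ * D i := by
      have := hLile i
      nlinarith [hD0 i]
    rw [h2]
    exact h1.trans h3
  have hsum2 : ∑ i, ‖a i‖ ^ 2 ≤ 2 * LQ * ∑ i, D i := by
    rw [Finset.mul_sum]
    exact Finset.sum_le_sum (fun i _ => hai i)
  -- rewrite goal
  have hFin : F xt - F x - ⟪gradient F x, xt - x⟫ = (1 / (n:ℝ)) * ∑ i, D i := by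
    rw [hgFz, real_inner_smul_left, sum_inner, hF, hD]
    dsimp only
    rw [Finset.sum_sub_distrib, Finset.sum_sub_distrib]
    ring
  rw [hFin, Finset.sum_congr rfl (fun i _ => by rw [hrw i])]
  have hstep : ∑ i, ‖a i - b‖ ^ 2 ≤ 2 * LQ * ∑ i, D i := hvar.trans hsum2
  have hninv : 0 ≤ 1 / (n:ℝ) := by positivity
  calc (1 / (n:ℝ)) * ∑ i, ‖a i - b‖ ^ 2
      ≤ (1 / (n:ℝ)) * (2 * LQ * ∑ i, D i) := mul_le_mul_of_nonneg_left hstep hninv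
    _ = 2 * LQ * ((1 / (n:ℝ)) * ∑ i, D i) := by ring
end

section
/- Let f : ℝ^d → ℝ be L_f-smooth, let L_Q > 0, and let α₁, α₂, α₃ ∈ (0,1) with α₁ + α₂ + α₃ = 1. Given points x^{ag}, x_{prev}, x_{new}, x̃, x ∈ ℝ^d and an arbitrary vector v ∈ ℝ^d, set x^{md} = α₁·x^{ag} + α₂·x_{prev} + α₃·x̃ and x^{ag+} = α₁·x^{ag} + α₂·x_{new} + α₃·x̃. Then f(x^{ag+}) ≤ α₁·( f(x^{md}) + ⟨v, x^{ag} − x^{md}⟩ ) + α₂·( f(x^{md}) + ⟨v, x − x^{md}⟩ ) + α₃·( f(x^{md}) + ⟨v, x̃ − x^{md}⟩ + (1/(2·L_Q))·‖∇f(x^{md}) − v‖² ) + α₂·⟨v, x_{new} − x⟩ + (α₂²/2)·( L_Q/α₃ + L_f )·‖x_{new} − x_{prev}‖². -/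
open RealInnerProductSpace

theorem descent_lemma {d : ℕ} (f : EuclideanSpace ℝ (Fin d) → ℝ) (Lf : ℝ)
    (hdiff : Differentiable ℝ f)
    (hsmooth : ∀ u v', ‖gradient f u - gradient f v'‖ ≤ Lf * ‖u - v'‖)
    (x w : EuclideanSpace ℝ (Fin d)) :
    f (x + w) ≤ f x + ⟪gradient f x, w⟫ + Lf / 2 * ‖w‖ ^ 2 := by
  set φ : ℝ → ℝ := fun t => f (x + t • w) - t * ⟪gradient f x, w⟫ - t ^ 2 / 2 * (Lf * ‖w‖ ^ 2)
    with hφ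
  have hline : ∀ t : ℝ, HasDerivAt (fun t : ℝ => x + t • w) w t := by
    intro t
    simpa using (hasDerivAt_id t).smul_const w |>.const_add x
  have hd : ∀ t : ℝ, HasDerivAt φ
      (⟪gradient f (x + t • w), w⟫ - ⟪gradient f x, w⟫ - t * (Lf * ‖w‖ ^ 2)) t := by
    intro t
    have h1 : HasDerivAt (fun t : ℝ => f (x + t • w)) (⟪gradient f (x + t • w), w⟫) t := by
      have := ((hdiff (x + t • w)).hasGradientAt.hasFDerivAt).comp_hasDerivAt t (hline t)
      simpa [InnerProductSpace.toDual_apply_apply, Function.comp_def] using this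
    have h2 : HasDerivAt (fun t : ℝ => t * ⟪gradient f x, w⟫) (⟪gradient f x, w⟫) t := by
      simpa using (hasDerivAt_id t).mul_const _
    have h3 : HasDerivAt (fun t : ℝ => t ^ 2 / 2 * (Lf * ‖w‖ ^ 2)) (t * (Lf * ‖w‖ ^ 2)) t := by
      have : HasDerivAt (fun t : ℝ => t ^ 2 / 2) t t := by
        simpa using ((hasDerivAt_pow 2 t).div_const 2)
      simpa using this.mul_const _
    exact (h1.sub h2).sub h3
  have hanti : AntitoneOn φ (Set.Icc (0 : ℝ) 1) := by
    apply antitoneOn_of_deriv_nonpos (convex_Icc 0 1)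
    · exact fun t _ => (hd t).continuousAt.continuousWithinAt
    · exact fun t _ => (hd t).differentiableAt.differentiableWithinAt
    · intro t ht
      rw [interior_Icc] at ht
      rw [(hd t).deriv]
      have hcs : ⟪gradient f (x + t • w) - gradient f x, w⟫ ≤
          ‖gradient f (x + t • w) - gradient f x‖ * ‖w‖ := real_inner_le_norm _ _
      have hls : ‖gradient f (x + t • w) - gradient f x‖ ≤ Lf * (t * ‖w‖) := by
        have := hsmooth (x + t • w) x
        simpa [norm_smul, abs_of_pos ht.1] using this
      have hwn : (0:ℝ) ≤ ‖w‖ := norm_nonneg _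
      have := hcs.trans (mul_le_mul_of_nonneg_right hls hwn)
      rw [inner_sub_left] at hcs
      nlinarith [real_inner_le_norm (gradient f (x + t • w) - gradient f x) w,
        inner_sub_left (𝕜 := ℝ) (gradient f (x + t • w)) (gradient f x) w]
  have := hanti (Set.left_mem_Icc.2 one_pos.le) (Set.right_mem_Icc.2 one_pos.le) one_pos.le
  simp only [hφ, one_smul, zero_smul, add_zero, zero_mul, one_pow, zero_sub, sub_zero,
    one_mul] at this
  norm_num [-PiLp.inner_apply] at this
  have hgw : ⟪gradient f x, w⟫ = fderiv ℝ f x w := InnerProductSpace.toDual_symm_apply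
  linarith

/-- One-step descent-type inequality with auxiliary points. -/
theorem stmt_2 (d : ℕ) (f : EuclideanSpace ℝ (Fin d) → ℝ) (Lf LQ : ℝ) (hLQ : 0 < LQ)
    (hdiff : Differentiable ℝ f)
    (hsmooth : ∀ u v', ‖gradient f u - gradient f v'‖ ≤ Lf * ‖u - v'‖)
    (α₁ α₂ α₃ : ℝ) (hα₁ : α₁ ∈ Set.Ioo (0 : ℝ) 1) (hα₂ : α₂ ∈ Set.Ioo (0 : ℝ) 1)
    (hα₃ : α₃ ∈ Set.Ioo (0 : ℝ) 1) (hsum : α₁ + α₂ + α₃ = 1)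
    (xag xprev xnew xt x v : EuclideanSpace ℝ (Fin d))
    (xmd : EuclideanSpace ℝ (Fin d)) (hxmd : xmd = α₁ • xag + α₂ • xprev + α₃ • xt)
    (xagp : EuclideanSpace ℝ (Fin d)) (hxagp : xagp = α₁ • xag + α₂ • xnew + α₃ • xt) :
    f xagp ≤ α₁ * (f xmd + ⟪v, xag - xmd⟫) + α₂ * (f xmd + ⟪v, x - xmd⟫)
      + α₃ * (f xmd + ⟪v, xt - xmd⟫ + (1 / (2 * LQ)) * ‖gradient f xmd - v‖ ^ 2)
      + α₂ * ⟪v, xnew - x⟫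
      + (α₂ ^ 2 / 2) * (LQ / α₃ + Lf) * ‖xnew - xprev‖ ^ 2 := by
  set w : EuclideanSpace ℝ (Fin d) := α₂ • (xnew - xprev) with hw
  set g : EuclideanSpace ℝ (Fin d) := gradient f xmd with hg
  have hxw : xagp = xmd + w := by rw [hxmd, hxagp, hw]; module
  have hdesc : f xagp ≤ f xmd + ⟪g, w⟫ + Lf / 2 * ‖w‖ ^ 2 := by
    rw [hxw]; exact descent_lemma f Lf hdiff hsmooth xmd w
  have hnw : ‖w‖ ^ 2 = α₂ ^ 2 * ‖xnew - xprev‖ ^ 2 := by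
    rw [hw, norm_smul, Real.norm_eq_abs, abs_of_pos hα₂.1]; ring
  have hyoung : ⟪g - v, w⟫ ≤ α₃ / (2 * LQ) * ‖g - v‖ ^ 2 + LQ / (2 * α₃) * ‖w‖ ^ 2 := by
    have h1 := real_inner_le_norm (g - v) w
    have hα₃0 := hα₃.1
    have h2 : (0:ℝ) < 2 * LQ * α₃ := by positivity
    have key : ⟪g - v, w⟫ * (2 * LQ * α₃)
        ≤ (α₃ / (2 * LQ) * ‖g - v‖ ^ 2 + LQ / (2 * α₃) * ‖w‖ ^ 2) * (2 * LQ * α₃) := by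
      have e1 : (α₃ / (2 * LQ) * ‖g - v‖ ^ 2 + LQ / (2 * α₃) * ‖w‖ ^ 2) * (2 * LQ * α₃)
          = α₃ ^ 2 * ‖g - v‖ ^ 2 + LQ ^ 2 * ‖w‖ ^ 2 := by
        field_simp
      rw [e1]
      nlinarith [sq_nonneg (α₃ * ‖g - v‖ - LQ * ‖w‖), norm_nonneg (g - v), norm_nonneg w,
        mul_nonneg (norm_nonneg (g - v)) (norm_nonneg w)]
    exact le_of_mul_le_mul_right key h2
  have hsplit : ⟪g, w⟫ = ⟪v, w⟫ + ⟪g - v, w⟫ := by rw [inner_sub_left]; ring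
  have hxcomb : α₁ • (xag - xmd) + α₂ • (x - xmd) + α₃ • (xt - xmd) + α₂ • (xnew - x) = w := by
    have h1 : α₁ = 1 - α₂ - α₃ := by linarith
    rw [hw, hxmd, h1]; module
  have hcomb : α₁ * ⟪v, xag - xmd⟫ + α₂ * ⟪v, x - xmd⟫ + α₃ * ⟪v, xt - xmd⟫
      + α₂ * ⟪v, xnew - x⟫ = ⟪v, w⟫ := by
    rw [← hxcomb]
    simp only [inner_add_right, real_inner_smul_right]
  have hα₃ne : α₃ ≠ 0 := ne_of_gt hα₃.1
  have hLQne : LQ ≠ 0 := ne_of_gt hLQ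
  have heq : α₁ * (f xmd + ⟪v, xag - xmd⟫) + α₂ * (f xmd + ⟪v, x - xmd⟫)
      + α₃ * (f xmd + ⟪v, xt - xmd⟫ + (1 / (2 * LQ)) * ‖g - v‖ ^ 2)
      + α₂ * ⟪v, xnew - x⟫
      + (α₂ ^ 2 / 2) * (LQ / α₃ + Lf) * ‖xnew - xprev‖ ^ 2
      = f xmd + ⟪v, w⟫ + α₃ / (2 * LQ) * ‖g - v‖ ^ 2 + LQ / (2 * α₃) * ‖w‖ ^ 2
        + Lf / 2 * ‖w‖ ^ 2 := by
    linear_combination (f xmd) * hsum + hcomb - (LQ / (2 * α₃) + Lf / 2) * hnw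
  linarith [hdesc, hyoung, hsplit, heq]
end

section
/- Let n ≥ 1 and let f_1, …, f_n : ℝ^d → ℝ each be convex and L_i-smooth, let f = (1/n)·Σ_{i=1}^n f_i be L_f-smooth, and let L_Q = max_i L_i. Let α₁, α₂, α₃ ∈ (0,1) with α₁ + α₂ + α₃ = 1 and let L̄ ≥ L_Q/α₃ + L_f. Given points x^{ag}, x_{prev}, x̃, x ∈ ℝ^d, set x^{md} = α₁·x^{ag} + α₂·x_{prev} + α₃·x̃, and for each i ∈ {1,…,n} set v^i = ∇f_i(x^{md}) − ∇f_i(x̃) + ∇f(x̃); let x^i ∈ ℝ^d be arbitrary points and set x^{ag,i} = α₁·x^{ag} + α₂·x^i + α₃·x̃. Then (1/n)·Σ_{i=1}^n f(x^{ag,i}) ≤ α₁·f(x^{ag}) + α₂·f(x) + α₃·f(x̃) + α₂·(1/n)·Σ_{i=1}^n ⟨v^i, x^i − x⟩ + (α₂²·L̄/2)·(1/n)·Σ_{i=1}^n ‖x^i − x_{prev}‖². -/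
open RealInnerProductSpace

section Helpers

variable {E : Type*} [NormedAddCommGroup E] [InnerProductSpace ℝ E] [CompleteSpace E]

private lemma svrg_line_hasDerivAt {h : E → ℝ} {gh : E → E} (hg : ∀ z, HasGradientAt h (gh z) z)
    (u w : E) (t : ℝ) :
    HasDerivAt (fun s : ℝ => h (u + s • w)) ⟪gh (u + t • w), w⟫ t := by
  have hline : HasDerivAt (fun s : ℝ => u + s • w) w t := by
    simpa using ((hasDerivAt_id t).smul_const w).const_add u
  have hf : HasFDerivAt h (InnerProductSpace.toDual ℝ E (gh (u + t • w))) (u + t • w) := hg _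
  exact hf.comp_hasDerivAt t hline

private lemma svrg_convex_lb {h : E → ℝ} {gh : E → E} (hc : ConvexOn ℝ Set.univ h)
    (hg : ∀ z, HasGradientAt h (gh z) z) (u v : E) :
    h u + ⟪gh u, v - u⟫ ≤ h v := by
  set w := v - u with hw
  have hcomp : ConvexOn ℝ Set.univ (fun s : ℝ => h (u + s • w)) := by
    have := hc.comp_affineMap (AffineMap.lineMap u v : ℝ →ᵃ[ℝ] E)
    simpa [Function.comp_def, AffineMap.lineMap_apply, hw, add_comm] using this
  have hd : HasDerivAt (fun s : ℝ => h (u + s • w)) ⟪gh u, w⟫ 0 := by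
    simpa using svrg_line_hasDerivAt hg u w 0
  have := hcomp.le_slope_of_hasDerivAt (Set.mem_univ 0) (Set.mem_univ 1) one_pos hd
  rw [slope_def_field] at this
  simp only [zero_smul, add_zero, one_smul] at this ⊢
  have h1 : u + w = v := by rw [hw]; abel
  rw [h1] at this
  linarith [this]

private lemma svrg_descent_lemma {h : E → ℝ} {gh : E → E} {Lc : ℝ}
    (hg : ∀ z, HasGradientAt h (gh z) z)
    (hlip : ∀ a b, ‖gh a - gh b‖ ≤ Lc * ‖a - b‖) (u v : E) :
    h v ≤ h u + ⟪gh u, v - u⟫ + Lc / 2 * ‖v - u‖ ^ 2 := by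
  set w := v - u with hw
  have hcont : Continuous gh := by
    rcases le_or_gt Lc 0 with hL | hL
    · have : ∀ a b : E, gh a = gh b := by
        intro a b
        have h1 := hlip a b
        have h2 : Lc * ‖a - b‖ ≤ 0 := mul_nonpos_of_nonpos_of_nonneg hL (norm_nonneg _)
        have : ‖gh a - gh b‖ = 0 := le_antisymm (h1.trans h2) (norm_nonneg _)
        rwa [norm_eq_zero, sub_eq_zero] at this
      have : gh = fun _ => gh 0 := funext fun a => this a 0
      rw [this]; exact continuous_const
    · exact (LipschitzWith.of_dist_le_mul (K := ⟨Lc, hL.le⟩) (by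
        intro a b; rw [dist_eq_norm, dist_eq_norm]; exact hlip a b)).continuous
  have hder : ∀ t : ℝ, HasDerivAt (fun s : ℝ => h (u + s • w)) ⟪gh (u + t • w), w⟫ t :=
    fun t => svrg_line_hasDerivAt hg u w t
  have hdc : Continuous (fun t : ℝ => ⟪gh (u + t • w), w⟫ ) :=
    (hcont.comp (by continuity)).inner continuous_const
  have hftc : ∫ t in (0:ℝ)..1, ⟪gh (u + t • w), w⟫ = h (u + (1:ℝ) • w) - h (u + (0:ℝ) • w) :=
    intervalIntegral.integral_eq_sub_of_hasDerivAt (fun t _ => hder t)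
      (hdc.intervalIntegrable 0 1)
  have hbound : ∫ t in (0:ℝ)..1, ⟪gh (u + t • w), w⟫
      ≤ ∫ t in (0:ℝ)..1, (⟪gh u, w⟫ + Lc * ‖w‖ ^ 2 * t) := by
    apply intervalIntegral.integral_mono_on zero_le_one (hdc.intervalIntegrable 0 1)
      (by apply Continuous.intervalIntegrable; fun_prop)
    intro t ht
    have key : ⟪gh (u + t • w) - gh u, w⟫ ≤ Lc * ‖w‖ ^ 2 * t := by
      calc ⟪gh (u + t • w) - gh u, w⟫ ≤ ‖gh (u + t • w) - gh u‖ * ‖w‖ :=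
            real_inner_le_norm _ _
        _ ≤ (Lc * ‖(u + t • w) - u‖) * ‖w‖ := by
            have := hlip (u + t • w) u
            exact mul_le_mul_of_nonneg_right this (norm_nonneg _)
        _ = Lc * ‖w‖ ^ 2 * t := by
            rw [add_sub_cancel_left, norm_smul, Real.norm_eq_abs, abs_of_nonneg ht.1]
            ring
    have := inner_sub_left (𝕜 := ℝ) (gh (u + t • w)) (gh u) w
    simp only [this] at key ⊢
    linarith
  have hrhs : ∫ t in (0:ℝ)..1, (⟪gh u, w⟫ + Lc * ‖w‖ ^ 2 * t) = ⟪gh u, w⟫ + Lc / 2 * ‖w‖ ^ 2 := by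
    rw [intervalIntegral.integral_add (intervalIntegrable_const)
      ((intervalIntegral.intervalIntegrable_id).const_mul _)]
    rw [intervalIntegral.integral_const, intervalIntegral.integral_const_mul, integral_id]
    simp [smul_eq_mul]
    ring
  rw [hftc, hrhs] at hbound
  simp only [zero_smul, add_zero, one_smul] at hbound
  have h1 : u + w = v := by rw [hw]; abel
  rw [h1] at hbound
  linarith

private lemma svrg_cocoercive {h : E → ℝ} {gh : E → E} {Lc : ℝ} (hc : ConvexOn ℝ Set.univ h)
    (hg : ∀ z, HasGradientAt h (gh z) z)
    (hlip : ∀ a b, ‖gh a - gh b‖ ≤ Lc * ‖a - b‖) (hL : 0 < Lc) (u v : E) :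
    ‖gh v - gh u‖ ^ 2 ≤ 2 * Lc * (h v - h u - ⟪gh u, v - u⟫) := by
  set ψ : E → ℝ := fun z => h z - ⟪gh u, z⟫ with hψ
  set gψ : E → E := fun z => gh z - gh u with hgψ
  have hψg : ∀ z, HasGradientAt ψ (gψ z) z := by
    intro z
    have h1 : HasFDerivAt h (InnerProductSpace.toDual ℝ E (gh z)) z := hg z
    have h2 : HasFDerivAt (fun z : E => ⟪gh u, z⟫) (InnerProductSpace.toDual ℝ E (gh u)) z := by
      exact (InnerProductSpace.toDual ℝ E (gh u)).hasFDerivAt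
    have h3 := h1.sub h2
    rw [← map_sub] at h3
    exact h3
  have hψc : ConvexOn ℝ Set.univ ψ := by
    have hcon : ConcaveOn ℝ Set.univ (fun z : E => ⟪gh u, z⟫) :=
      ⟨convex_univ, fun x _ y _ a b _ _ _ => by
        simp [inner_add_right, real_inner_smul_right]⟩
    exact hc.sub hcon
  have hψlip : ∀ a b, ‖gψ a - gψ b‖ ≤ Lc * ‖a - b‖ := by
    intro a b; simpa [hgψ, sub_sub_sub_cancel_right] using hlip a b
  set g : E := gh v - gh u with hg'
  set w : E := v - Lc⁻¹ • g with hwdef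
  have key1 : ψ u ≤ ψ w := by
    have := svrg_convex_lb hψc hψg u w
    simpa [hgψ] using this
  have key2 : ψ w ≤ ψ v - ‖g‖ ^ 2 / (2 * Lc) := by
    have := svrg_descent_lemma hψg hψlip v w
    have hwv : w - v = -(Lc⁻¹ • g) := by rw [hwdef]; abel
    have e1 : ⟪gψ v, w - v⟫ = -(Lc⁻¹ * ‖g‖ ^ 2) := by
      rw [hwv, inner_neg_right, real_inner_smul_right]
      rw [show gψ v = g from rfl, real_inner_self_eq_norm_sq]
    have e2 : ‖w - v‖ ^ 2 = Lc⁻¹ ^ 2 * ‖g‖ ^ 2 := by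
      rw [hwv, norm_neg, norm_smul, Real.norm_eq_abs, mul_pow, sq_abs]
    rw [e1, e2] at this
    have : ψ w ≤ ψ v - Lc⁻¹ * ‖g‖ ^ 2 + Lc / 2 * (Lc⁻¹ ^ 2 * ‖g‖ ^ 2) := by linarith
    calc ψ w ≤ ψ v - Lc⁻¹ * ‖g‖ ^ 2 + Lc / 2 * (Lc⁻¹ ^ 2 * ‖g‖ ^ 2) := this
      _ = ψ v - ‖g‖ ^ 2 / (2 * Lc) := by
          have hne : Lc ≠ 0 := ne_of_gt hL
          field_simp
          ring
  have hfinal : ψ u ≤ ψ v - ‖g‖ ^ 2 / (2 * Lc) := key1.trans key2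
  have hexp : ψ u = h u - ⟪gh u, u⟫ := rfl
  have hexp2 : ψ v = h v - ⟪gh u, v⟫ := rfl
  rw [hexp, hexp2] at hfinal
  rw [inner_sub_right]
  have h2 : ‖g‖ ^ 2 / (2 * Lc) ≤ h v - h u - (⟪gh u, v⟫ - ⟪gh u, u⟫) := by linarith
  have h3 := (div_le_iff₀ (by positivity : (0:ℝ) < 2 * Lc)).mp h2
  linarith

private lemma svrg_grad_avg {n : ℕ} {f : Fin n → E → ℝ} (hdiff : ∀ i, Differentiable ℝ (f i))
    (y : E) :
    HasGradientAt (fun x => (1 / (n : ℝ)) * ∑ i, f i x)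
      ((1 / (n : ℝ)) • ∑ i, gradient (f i) y) y := by
  have h1 : ∀ i : Fin n, HasFDerivAt (f i)
      (InnerProductSpace.toDual ℝ E (gradient (f i) y)) y :=
    fun i => ((hdiff i) y).hasGradientAt
  have hsum : HasFDerivAt (fun x => ∑ i, f i x)
      (∑ i, InnerProductSpace.toDual ℝ E (gradient (f i) y)) y :=
    HasFDerivAt.fun_sum (fun i _ => h1 i)
  have h2 := hsum.const_mul ((1:ℝ)/n)
  show HasFDerivAt _ (InnerProductSpace.toDual ℝ E _) y
  rw [map_smul, map_sum]
  exact h2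

omit [CompleteSpace E] in
private lemma svrg_sum_sq_dev_le {n : ℕ} (Δ : Fin n → E) (m : E)
    (hm : (n : ℝ) • m = ∑ i, Δ i) :
    ∑ i, ‖Δ i - m‖ ^ 2 ≤ ∑ i, ‖Δ i‖ ^ 2 := by
  have hexp : ∑ i, ‖Δ i - m‖ ^ 2
      = ∑ i, ‖Δ i‖ ^ 2 - 2 * ⟪∑ i, Δ i, m⟫ + (n : ℝ) * ‖m‖ ^ 2 := by
    rw [sum_inner]
    simp_rw [norm_sub_sq_real, Finset.sum_add_distrib, Finset.sum_sub_distrib,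
      Finset.sum_const, Finset.card_univ, Fintype.card_fin, ← Finset.mul_sum]
    push_cast
    ring
  have hip : ⟪∑ i, Δ i, m⟫ = (n : ℝ) * ‖m‖ ^ 2 := by
    rw [← hm, real_inner_smul_left, real_inner_self_eq_norm_sq]
  have hnn : 0 ≤ (n : ℝ) * ‖m‖ ^ 2 := by positivity
  rw [hexp, hip]
  linarith

end Helpers

set_option maxHeartbeats 2000000

/-- Averaged descent inequality for the SVRG-style stochastic gradient step. -/
theorem stmt_3 (d n : ℕ) (hn : 1 ≤ n)
    (f : Fin n → EuclideanSpace ℝ (Fin d) → ℝ) (L : Fin n → ℝ) (Lf : ℝ)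
    (hconv : ∀ i, ConvexOn ℝ Set.univ (f i))
    (hdiff : ∀ i, Differentiable ℝ (f i))
    (hsmooth : ∀ i, ∀ u v', ‖gradient (f i) u - gradient (f i) v'‖ ≤ L i * ‖u - v'‖)
    (F : EuclideanSpace ℝ (Fin d) → ℝ)
    (hF : F = fun x => (1 / (n : ℝ)) * ∑ i, f i x)
    (hFdiff : Differentiable ℝ F)
    (hFsmooth : ∀ u v', ‖gradient F u - gradient F v'‖ ≤ Lf * ‖u - v'‖)
    (LQ : ℝ)
    (hLQ : LQ = Finset.univ.sup' (Finset.univ_nonempty_iff.mpr ⟨⟨0, hn⟩⟩) L)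
    (α₁ α₂ α₃ : ℝ) (hα₁ : α₁ ∈ Set.Ioo (0 : ℝ) 1) (hα₂ : α₂ ∈ Set.Ioo (0 : ℝ) 1)
    (hα₃ : α₃ ∈ Set.Ioo (0 : ℝ) 1) (hsum : α₁ + α₂ + α₃ = 1)
    (Lbar : ℝ) (hLbar : LQ / α₃ + Lf ≤ Lbar)
    (xag xprev xt x : EuclideanSpace ℝ (Fin d))
    (xmd : EuclideanSpace ℝ (Fin d)) (hxmd : xmd = α₁ • xag + α₂ • xprev + α₃ • xt)
    (v : Fin n → EuclideanSpace ℝ (Fin d))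
    (hv : ∀ i, v i = gradient (f i) xmd - gradient (f i) xt + gradient F xt)
    (xI : Fin n → EuclideanSpace ℝ (Fin d))
    (xagI : Fin n → EuclideanSpace ℝ (Fin d))
    (hxagI : ∀ i, xagI i = α₁ • xag + α₂ • xI i + α₃ • xt) :
    (1 / (n : ℝ)) * ∑ i, F (xagI i)
      ≤ α₁ * F xag + α₂ * F x + α₃ * F xt
        + α₂ * ((1 / (n : ℝ)) * ∑ i, ⟪v i, xI i - x⟫)
        + (α₂ ^ 2 * Lbar / 2) * ((1 / (n : ℝ)) * ∑ i, ‖xI i - xprev‖ ^ 2) := by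
  classical
  have hnpos : (0:ℝ) < n := by exact_mod_cast hn
  have hne : (n:ℝ) ≠ 0 := ne_of_gt hnpos
  rcases Nat.eq_zero_or_pos d with hd | hd
  · -- trivial case d = 0
    subst hd
    haveI : Subsingleton (EuclideanSpace ℝ (Fin 0)) := ⟨fun a b => PiLp.ext fun i => i.elim0⟩
    have hFs : ∀ y, F y = F x := fun y => congrArg F (Subsingleton.elim y x)
    have hin : ∀ i : Fin n, ⟪v i, xI i - x⟫ = (0:ℝ) := fun i => by
      rw [Subsingleton.elim (xI i - x) (0 : EuclideanSpace ℝ (Fin 0))]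
      exact inner_zero_right _
    have hnm : ∀ i : Fin n, ‖xI i - xprev‖ ^ 2 = (0:ℝ) := fun i => by
      rw [Subsingleton.elim (xI i - xprev) (0 : EuclideanSpace ℝ (Fin 0))]; simp
    have h1 : ∑ i, F (xagI i) = (n:ℝ) * F x := by
      rw [Finset.sum_congr rfl fun i _ => hFs (xagI i)]
      simp [Finset.sum_const, Finset.card_univ, mul_comm]
    have h2 : ∑ i : Fin n, ⟪v i, xI i - x⟫ = (0:ℝ) := Finset.sum_eq_zero fun i _ => hin i
    have h3 : ∑ i : Fin n, ‖xI i - xprev‖ ^ 2 = (0:ℝ) := Finset.sum_eq_zero fun i _ => hnm i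
    rw [h1, h2, h3, hFs xag, hFs xt]
    have h4 : (1/(n:ℝ)) * ((n:ℝ) * F x) = F x := by field_simp
    rw [h4]
    have h5 : α₁ * F x + α₂ * F x + α₃ * F x = F x := by
      rw [← add_mul, ← add_mul, hsum, one_mul]
    simp only [mul_zero]
    linarith
  · -- main case d ≥ 1
    obtain ⟨e, he⟩ : ∃ e : EuclideanSpace ℝ (Fin d), ‖e‖ = 1 :=
      ⟨EuclideanSpace.single ⟨0, hd⟩ 1, by simp [EuclideanSpace.norm_single]⟩
    have hLi0 : ∀ i, 0 ≤ L i := by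
      intro i
      have h1 := hsmooth i e 0
      rw [sub_zero, he, mul_one] at h1
      exact le_trans (norm_nonneg _) h1
    have hLf0 : 0 ≤ Lf := by
      have h1 := hFsmooth e 0
      rw [sub_zero, he, mul_one] at h1
      exact le_trans (norm_nonneg _) h1
    have hLiLQ : ∀ i, L i ≤ LQ := fun i => hLQ ▸ Finset.le_sup' L (Finset.mem_univ i)
    have hLQ0 : 0 ≤ LQ := le_trans (hLi0 ⟨0, hn⟩) (hLiLQ _)
    have hα₃ne : α₃ ≠ 0 := ne_of_gt hα₃.1
    have hgf : ∀ i z, HasGradientAt (f i) (gradient (f i) z) z :=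
      fun i z => ((hdiff i) z).hasGradientAt
    have hgF : ∀ z, HasGradientAt F (gradient F z) z := fun z => (hFdiff z).hasGradientAt
    have hgradF : ∀ y, gradient F y = (1/(n:ℝ)) • ∑ i, gradient (f i) y := by
      intro y
      have h2 : HasGradientAt F ((1/(n:ℝ)) • ∑ i, gradient (f i) y) y := by
        rw [hF]; exact svrg_grad_avg hdiff y
      exact h2.gradient
    have hFconv : ConvexOn ℝ Set.univ F := by
      rw [hF]
      have hs : ∀ s : Finset (Fin n), ConvexOn ℝ Set.univ (fun z => ∑ i ∈ s, f i z) := by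
        intro s
        induction s using Finset.induction_on with
        | empty => simpa using convexOn_const (0:ℝ) convex_univ
        | insert _ _ hx ih =>
          simp_rw [Finset.sum_insert hx]
          exact (hconv _).add ih
      have := (hs Finset.univ).smul (le_of_lt (by positivity : (0:ℝ) < 1/(n:ℝ)))
      simpa [smul_eq_mul] using this
    set Δ : Fin n → EuclideanSpace ℝ (Fin d) :=
      fun i => gradient (f i) xmd - gradient (f i) xt with hΔdef
    set Δb : EuclideanSpace ℝ (Fin d) := gradient F xmd - gradient F xt with hΔbdef
    have hΔb : (n:ℝ) • Δb = ∑ i, Δ i := by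
      have h1 : Δb = (1/(n:ℝ)) • ∑ i, Δ i := by
        rw [hΔbdef, hgradF xmd, hgradF xt, ← smul_sub, ← Finset.sum_sub_distrib]
      rw [h1, smul_smul, show (n:ℝ) * (1/n) = 1 by field_simp, one_smul]
    set δ : Fin n → EuclideanSpace ℝ (Fin d) := fun i => Δb - Δ i with hδdef
    have hδsum : ∑ i, δ i = 0 := by
      simp only [hδdef]
      rw [Finset.sum_sub_distrib, Finset.sum_const, Finset.card_univ, Fintype.card_fin,
        sub_eq_zero, ← hΔb, Nat.cast_smul_eq_nsmul]
    set g : Fin n → ℝ :=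
      fun i => f i xt - f i xmd - ⟪gradient (f i) xmd, xt - xmd⟫ with hgdef
    have hg0 : ∀ i, 0 ≤ g i := by
      intro i
      have := svrg_convex_lb (hconv i) (hgf i) xmd xt
      simp only [hgdef]
      linarith
    have hΔg : ∀ i, ‖Δ i‖^2 ≤ 2 * LQ * g i := by
      intro i
      rcases lt_or_ge 0 (L i) with hpos | hnonpos
      · have h1 : ‖gradient (f i) xt - gradient (f i) xmd‖ ^ 2 ≤ 2 * L i * g i :=
          svrg_cocoercive (hconv i) (hgf i) (hsmooth i) hpos xmd xt
        have h2 : ‖Δ i‖ = ‖gradient (f i) xt - gradient (f i) xmd‖ := by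
          simp only [hΔdef]; exact norm_sub_rev _ _
        calc ‖Δ i‖ ^ 2 = ‖gradient (f i) xt - gradient (f i) xmd‖ ^ 2 := by rw [h2]
          _ ≤ 2 * L i * g i := h1
          _ ≤ 2 * LQ * g i := by nlinarith [hg0 i, hLiLQ i]
      · have h3 : ‖Δ i‖ ≤ L i * ‖xmd - xt‖ := hsmooth i xmd xt
        have h4 : L i * ‖xmd - xt‖ ≤ 0 :=
          mul_nonpos_of_nonpos_of_nonneg hnonpos (norm_nonneg _)
        have h5 : ‖Δ i‖ = 0 := le_antisymm (le_trans h3 h4) (norm_nonneg _)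
        have h6 : ‖Δ i‖ ^ 2 = 0 := by rw [h5]; ring
        rw [h6]
        exact mul_nonneg (mul_nonneg (by norm_num) hLQ0) (hg0 i)
    set G : ℝ := F xt - F xmd - ⟪gradient F xmd, xt - xmd⟫ with hGdef
    have hG0 : 0 ≤ G := by
      have := svrg_convex_lb hFconv hgF xmd xt
      rw [hGdef]; linarith
    have hGg : (n:ℝ) * G = ∑ i, g i := by
      have e1 : F xt = (1/(n:ℝ)) * ∑ i, f i xt := by rw [hF]
      have e2 : F xmd = (1/(n:ℝ)) * ∑ i, f i xmd := by rw [hF]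
      have e3 : ⟪gradient F xmd, xt - xmd⟫
          = (1/(n:ℝ)) * ∑ i, ⟪gradient (f i) xmd, xt - xmd⟫ := by
        rw [hgradF xmd, real_inner_smul_left, sum_inner]
      have e4 : ∑ i, g i = ∑ i, f i xt - ∑ i, f i xmd
          - ∑ i, ⟪gradient (f i) xmd, xt - xmd⟫ := by
        simp only [hgdef]
        rw [Finset.sum_sub_distrib, Finset.sum_sub_distrib]
      rw [hGdef, e1, e2, e3, e4]
      field_simp
    have hvar : ∑ i, ‖δ i‖^2 ≤ 2 * LQ * ((n:ℝ) * G) := by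
      have h1 : ∑ i, ‖δ i‖^2 = ∑ i, ‖Δ i - Δb‖^2 :=
        Finset.sum_congr rfl fun i _ => by simp only [hδdef]; rw [norm_sub_rev]
      rw [h1, hGg]
      calc ∑ i, ‖Δ i - Δb‖^2 ≤ ∑ i, ‖Δ i‖^2 := svrg_sum_sq_dev_le Δ Δb hΔb
        _ ≤ ∑ i, 2 * LQ * g i := Finset.sum_le_sum (fun i _ => hΔg i)
        _ = 2 * LQ * ∑ i, g i := by rw [Finset.mul_sum]
    clear_value Δ Δb δ g G
    -- per-index key inequality
    have key : ∀ i, F (xagI i)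
        ≤ α₁ * F xag + α₂ * F x + α₃ * F xt - α₃ * G
          + α₂ * ⟪v i, xI i - x⟫ + α₂ * ⟪δ i, xI i - xprev⟫ + α₂ * ⟪δ i, xprev - x⟫
          + α₂^2 * Lf / 2 * ‖xI i - xprev‖^2 := by
      intro i
      have hdesc := svrg_descent_lemma hgF hFsmooth xmd (xagI i)
      have hdiffpt : xagI i - xmd = α₂ • (xI i - xprev) := by
        rw [hxagI i, hxmd]; module
      have hnorm : ‖xagI i - xmd‖^2 = α₂^2 * ‖xI i - xprev‖^2 := by
        rw [hdiffpt, norm_smul, Real.norm_eq_abs, mul_pow, sq_abs]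
      have hip1 : ⟪gradient F xmd, xagI i - xmd⟫
          = α₂ * ⟪gradient F xmd, xI i - xprev⟫ := by
        rw [hdiffpt, real_inner_smul_right]
      have hvδ : v i + δ i = gradient F xmd := by
        rw [hv i]; simp only [hδdef, hΔbdef, hΔdef]; abel
      have hA4 : ⟪gradient F xmd, xI i - x⟫
          = ⟪v i, xI i - x⟫ + ⟪δ i, xI i - x⟫ := by
        rw [← hvδ, inner_add_left]
      have hA3 : ⟪gradient F xmd, xI i - xprev⟫
          = ⟪gradient F xmd, xI i - x⟫ + ⟪gradient F xmd, x - xprev⟫ := by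
        rw [← inner_add_right]; congr 1; abel
      have hA5 : ⟪δ i, xI i - x⟫ = ⟪δ i, xI i - xprev⟫ + ⟪δ i, xprev - x⟫ := by
        rw [← inner_add_right]; congr 1; abel
      have hc1 := svrg_convex_lb hFconv hgF xmd xag
      have hc2 := svrg_convex_lb hFconv hgF xmd x
      have m1 := mul_le_mul_of_nonneg_left hc1 hα₁.1.le
      have m2 := mul_le_mul_of_nonneg_left hc2 hα₂.1.le
      have emd : ⟪gradient F xmd, xmd⟫ = α₁ * ⟪gradient F xmd, xag⟫
          + α₂ * ⟪gradient F xmd, xprev⟫ + α₃ * ⟪gradient F xmd, xt⟫ := by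
        nth_rewrite 2 [hxmd]
        rw [inner_add_right, inner_add_right, real_inner_smul_right,
          real_inner_smul_right, real_inner_smul_right]
      have s1 : ⟪gradient F xmd, xag - xmd⟫
          = ⟪gradient F xmd, xag⟫ - ⟪gradient F xmd, xmd⟫ := inner_sub_right _ _ _
      have s2 : ⟪gradient F xmd, x - xmd⟫
          = ⟪gradient F xmd, x⟫ - ⟪gradient F xmd, xmd⟫ := inner_sub_right _ _ _
      have s3 : ⟪gradient F xmd, xt - xmd⟫
          = ⟪gradient F xmd, xt⟫ - ⟪gradient F xmd, xmd⟫ := inner_sub_right _ _ _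
      have s4 : ⟪gradient F xmd, x - xprev⟫
          = ⟪gradient F xmd, x⟫ - ⟪gradient F xmd, xprev⟫ := inner_sub_right _ _ _
      have hsum1 : (α₁ + α₂ + α₃) * F xmd = F xmd := by rw [hsum, one_mul]
      have hsum2 : (α₁ + α₂ + α₃) * ⟪gradient F xmd, xmd⟫ = ⟪gradient F xmd, xmd⟫ := by
        rw [hsum, one_mul]
      have m3 : α₃ * G = α₃ * F xt - α₃ * F xmd
          - α₃ * ⟪gradient F xmd, xt⟫ + α₃ * ⟪gradient F xmd, xmd⟫ := by
        rw [hGdef, s3]; ring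
      have hA6 : F xmd + α₂ * ⟪gradient F xmd, x - xprev⟫
          ≤ α₁ * F xag + α₂ * F x + α₃ * F xt - α₃ * G := by
        rw [s1] at m1; rw [s2] at m2; rw [s4]
        linarith [m1, m2, m3, emd, hsum1, hsum2]
      clear hc1 hc2 m1 m2 m3 emd s1 s2 s3 s4 hsum1 hsum2
      have hmain : ⟪gradient F xmd, xI i - xprev⟫
          = ⟪v i, xI i - x⟫ + ⟪δ i, xI i - xprev⟫ + ⟪δ i, xprev - x⟫
            + ⟪gradient F xmd, x - xprev⟫ := by
        linarith [hA3, hA4, hA5]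
      rw [hip1, hnorm, hmain] at hdesc
      linarith [hdesc, hA6]
    -- Young inequality, averaged
    have hSQ0 : 0 ≤ ∑ i, ‖xI i - xprev‖^2 := Finset.sum_nonneg fun i _ => by positivity
    have hyoung : ∑ i, α₂ * ⟪δ i, xI i - xprev⟫
        ≤ α₃ * ((n:ℝ) * G) + α₂^2 * LQ / (2*α₃) * ∑ i, ‖xI i - xprev‖^2 := by
      rcases eq_or_lt_of_le hLQ0 with hLQz | hLQpos
      · have h2 : ∀ j ∈ Finset.univ, (0:ℝ) ≤ ‖δ j‖^2 := fun j _ => by positivity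
        have h1 : ∑ j, ‖δ j‖^2 ≤ 0 := by
          have := hvar; rw [← hLQz] at this; simpa using this
        have hz := (Finset.sum_eq_zero_iff_of_nonneg h2).mp
          (le_antisymm h1 (Finset.sum_nonneg h2))
        have hδ0 : ∀ i, δ i = 0 := by
          intro i
          have := hz i (Finset.mem_univ i)
          rwa [pow_eq_zero_iff (by norm_num), norm_eq_zero] at this
        have hzero : ∑ i, α₂ * ⟪δ i, xI i - xprev⟫ = 0 :=
          Finset.sum_eq_zero fun i _ => by rw [hδ0 i]; simp
        rw [hzero, ← hLQz]
        have he0 : α₂^2 * 0 / (2*α₃) * ∑ i, ‖xI i - xprev‖^2 = 0 := by ring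
        rw [he0, add_zero]
        exact mul_nonneg hα₃.1.le (mul_nonneg hnpos.le hG0)
      · have hy : ∀ i, α₂ * ⟪δ i, xI i - xprev⟫
            ≤ α₃/(2*LQ) * ‖δ i‖^2 + α₂^2*LQ/(2*α₃) * ‖xI i - xprev‖^2 := by
          intro i
          have h1 : ⟪δ i, xI i - xprev⟫ ≤ ‖δ i‖ * ‖xI i - xprev‖ := real_inner_le_norm _ _
          have h2 : α₂ * ⟪δ i, xI i - xprev⟫ ≤ α₂ * (‖δ i‖ * ‖xI i - xprev‖) :=
            mul_le_mul_of_nonneg_left h1 hα₂.1.le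
          have h3 : 0 ≤ (α₃ * ‖δ i‖ - α₂ * LQ * ‖xI i - xprev‖)^2 := sq_nonneg _
          have h4 : 0 < 2 * LQ * α₃ := mul_pos (mul_pos two_pos hLQpos) hα₃.1
          have h5 : α₃/(2*LQ) * ‖δ i‖^2 + α₂^2*LQ/(2*α₃) * ‖xI i - xprev‖^2
              - α₂ * (‖δ i‖ * ‖xI i - xprev‖)
              = ((α₃ * ‖δ i‖ - α₂ * LQ * ‖xI i - xprev‖)^2) / (2*LQ*α₃) := by
            field_simp
            ring
          nlinarith [div_nonneg h3 h4.le, h2, h5]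
        calc ∑ i, α₂ * ⟪δ i, xI i - xprev⟫
            ≤ ∑ i, (α₃/(2*LQ) * ‖δ i‖^2 + α₂^2*LQ/(2*α₃) * ‖xI i - xprev‖^2) :=
              Finset.sum_le_sum fun i _ => hy i
          _ = α₃/(2*LQ) * ∑ i, ‖δ i‖^2 + α₂^2*LQ/(2*α₃) * ∑ i, ‖xI i - xprev‖^2 := by
              rw [Finset.sum_add_distrib, ← Finset.mul_sum, ← Finset.mul_sum]
          _ ≤ α₃ * ((n:ℝ)*G) + α₂^2*LQ/(2*α₃) * ∑ i, ‖xI i - xprev‖^2 := by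
              have hc : α₃/(2*LQ) * ∑ i, ‖δ i‖^2 ≤ α₃/(2*LQ) * (2*LQ*((n:ℝ)*G)) :=
                mul_le_mul_of_nonneg_left hvar
                  (div_nonneg hα₃.1.le (by linarith [hLQpos]))
              have he2 : α₃/(2*LQ) * (2*LQ*((n:ℝ)*G)) = α₃ * ((n:ℝ)*G) := by
                field_simp
              linarith [hc]
    -- sum the per-index inequality
    have hsumkey := Finset.sum_le_sum (fun i (_ : i ∈ Finset.univ) => key i)
    have hrhs : ∑ i, (α₁ * F xag + α₂ * F x + α₃ * F xt - α₃ * G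
          + α₂ * ⟪v i, xI i - x⟫ + α₂ * ⟪δ i, xI i - xprev⟫ + α₂ * ⟪δ i, xprev - x⟫
          + α₂^2 * Lf / 2 * ‖xI i - xprev‖^2)
        = (n:ℝ) * (α₁ * F xag + α₂ * F x + α₃ * F xt - α₃ * G)
          + α₂ * ∑ i, ⟪v i, xI i - x⟫ + ∑ i, α₂ * ⟪δ i, xI i - xprev⟫
          + α₂ * ∑ i, ⟪δ i, xprev - x⟫ + α₂^2 * Lf / 2 * ∑ i, ‖xI i - xprev‖^2 := by
      rw [Finset.sum_add_distrib, Finset.sum_add_distrib, Finset.sum_add_distrib,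
        Finset.sum_add_distrib, Finset.sum_const, Finset.card_univ, Fintype.card_fin,
        nsmul_eq_mul, ← Finset.mul_sum, ← Finset.mul_sum, ← Finset.mul_sum,
        ← Finset.mul_sum]
    have hδp : ∑ i, ⟪δ i, xprev - x⟫ = (0:ℝ) := by
      rw [← sum_inner, hδsum]
      simp
    have hbud : α₂^2*LQ/(2*α₃) + α₂^2*Lf/2 ≤ α₂^2*Lbar/2 := by
      have h1 := mul_le_mul_of_nonneg_left hLbar (by positivity : (0:ℝ) ≤ α₂^2/2)
      have h2 : α₂^2/2 * (LQ/α₃ + Lf) = α₂^2*LQ/(2*α₃) + α₂^2*Lf/2 := by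
        field_simp
      linarith
    have hbudS : (α₂^2*LQ/(2*α₃) + α₂^2*Lf/2) * ∑ i, ‖xI i - xprev‖^2
        ≤ (α₂^2*Lbar/2) * ∑ i, ‖xI i - xprev‖^2 :=
      mul_le_mul_of_nonneg_right hbud hSQ0
    have hfinal_sum : ∑ i, F (xagI i)
        ≤ (n:ℝ) * (α₁ * F xag + α₂ * F x + α₃ * F xt) + α₂ * ∑ i, ⟪v i, xI i - x⟫
          + α₂^2 * Lbar / 2 * ∑ i, ‖xI i - xprev‖^2 := by
      rw [hrhs, hδp, mul_zero, add_zero] at hsumkey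
      linarith [hsumkey, hyoung, hbudS]
    have hmulfin := mul_le_mul_of_nonneg_left hfinal_sum
      (le_of_lt (by positivity : (0:ℝ) < 1/(n:ℝ)))
    calc (1 / (n : ℝ)) * ∑ i, F (xagI i)
        ≤ (1/(n:ℝ)) * ((n:ℝ) * (α₁ * F xag + α₂ * F x + α₃ * F xt)
            + α₂ * ∑ i, ⟪v i, xI i - x⟫ + α₂^2 * Lbar / 2 * ∑ i, ‖xI i - xprev‖^2) := hmulfin
      _ = α₁ * F xag + α₂ * F x + α₃ * F xt
          + α₂ * ((1/(n:ℝ)) * ∑ i, ⟪v i, xI i - x⟫)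
          + (α₂^2 * Lbar / 2) * ((1/(n:ℝ)) * ∑ i, ‖xI i - xprev‖^2) := by
        field_simp
end

section
/- Let s ≥ 1 be a natural number and suppose α₁ ∈ (0,1), α₂ ∈ (0, 2/(2+s)], α₃ ∈ (0,1) with α₁ + α₂ + α₃ = 1. Define α₂' = h(α₂), α₁' = α₁·(1 − α₂'), α₃' = (1 − α₁)·(1 − α₂'). Then α₁' ∈ (0, α₁), α₂' ∈ (0, min{α₂, 2/(s+3)}), α₃' ∈ (α₃, 1), and α₁' + α₂' + α₃' = 1. -/
/-- `h(a) = (√(a⁴ + 4a²) − a²)/2`. -/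
noncomputable def h (a : ℝ) : ℝ := (Real.sqrt (a ^ 4 + 4 * a ^ 2) - a ^ 2) / 2

set_option maxHeartbeats 1000000 in
/-- One step of the ASVRG-ADMM weight-parameter update preserves the invariants. -/
theorem stmt_12 (s : ℕ) (hs : 1 ≤ s) (α₁ α₂ α₃ : ℝ)
    (h1 : α₁ ∈ Set.Ioo (0 : ℝ) 1) (h2 : α₂ ∈ Set.Ioc (0 : ℝ) (2 / (2 + (s : ℝ))))
    (h3 : α₃ ∈ Set.Ioo (0 : ℝ) 1) (hsum : α₁ + α₂ + α₃ = 1)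
    (α₁' α₂' α₃' : ℝ) (hd2 : α₂' = h α₂) (hd1 : α₁' = α₁ * (1 - α₂'))
    (hd3 : α₃' = (1 - α₁) * (1 - α₂')) :
    α₁' ∈ Set.Ioo 0 α₁ ∧ α₂' ∈ Set.Ioo 0 (min α₂ (2 / ((s : ℝ) + 3)))
      ∧ α₃' ∈ Set.Ioo α₃ 1 ∧ α₁' + α₂' + α₃' = 1 := by
  obtain ⟨h1l, h1r⟩ := h1
  obtain ⟨h2l, h2r⟩ := h2
  obtain ⟨h3l, h3r⟩ := h3
  have hs' : (1:ℝ) ≤ (s:ℝ) := by exact_mod_cast hs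
  have hden : (0:ℝ) < 2 + (s:ℝ) := by linarith
  have ha2 : α₂ * (2 + (s:ℝ)) ≤ 2 := (le_div_iff₀ hden).mp h2r
  have hS2 : Real.sqrt (α₂^4 + 4*α₂^2) ^ 2 = α₂^4 + 4*α₂^2 :=
    Real.sq_sqrt (by positivity)
  have hSnn : 0 ≤ Real.sqrt (α₂^4 + 4*α₂^2) := Real.sqrt_nonneg _
  have hk_eq : α₂'^2 + α₂^2*α₂' = α₂^2 := by
    rw [hd2]; unfold h; nlinarith [hS2]
  have hk_pos : 0 < α₂' := by
    rw [hd2]; unfold h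
    have : α₂^2 < Real.sqrt (α₂^4 + 4*α₂^2) := by
      nlinarith [hS2, hSnn, sq_nonneg α₂]
    linarith
  have hk_lt1 : α₂' < 1 := by nlinarith
  have hk1' : 0 < 1 - α₂' := by linarith
  have hk_lt_a : α₂' < α₂ := by
    nlinarith [mul_pos (mul_pos h2l h2l) hk_pos, add_pos h2l hk_pos]
  have hT : (4:ℝ) ≤ (s:ℝ) + 3 := by linarith
  have ha2sq : α₂^2 * ((s:ℝ)+2)^2 ≤ 4 := by nlinarith [mul_pos h2l hden]
  have hkey : α₂'^2 * ((s:ℝ)+2)^2 ≤ 4 * (1 - α₂') := by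
    have heq : α₂'^2*((s:ℝ)+2)^2 = α₂^2*(1-α₂')*((s:ℝ)+2)^2 := by
      linear_combination ((s:ℝ)+2)^2 * hk_eq
    nlinarith [ha2sq, hk1']
  have hfin : α₂' * ((s:ℝ)+3) < 2 := by
    by_contra hcon
    push_neg at hcon
    have hp1 : (0:ℝ) ≤ α₂'*((s:ℝ)+3) - 2 := by linarith
    have hp2 : (0:ℝ) ≤ α₂'*((s:ℝ)+3) + 2 - 2*α₂' := by linarith
    nlinarith [mul_nonneg hp1 hp2, mul_pos hk_pos hk_pos]
  have hk_bound : α₂' < 2 / ((s:ℝ) + 3) := by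
    rw [lt_div_iff₀ (by linarith)]; exact hfin
  have h23 : α₂ + α₃ = 1 - α₁ := by linarith
  refine ⟨⟨?_, ?_⟩, ⟨hk_pos, lt_min hk_lt_a hk_bound⟩, ⟨?_, ?_⟩, ?_⟩
  · rw [hd1]; exact mul_pos h1l hk1'
  · rw [hd1]; nlinarith [mul_pos h1l hk_pos]
  · rw [hd3, ← h23]
    nlinarith [mul_lt_mul_of_pos_right hk_lt_a (by linarith : (0:ℝ) < α₂ + α₃),
      mul_lt_mul_of_pos_left (by linarith : α₂ + α₃ < 1) h2l]
  · rw [hd3]; nlinarith [mul_pos h1l hk_pos]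
  · rw [hd1, hd3]; ring
end

section
/- Let α₁ ∈ ℝ and α₂ > 0, and define α₂' = h(α₂), α₁' = α₁·(1 − α₂'), α₃' = (1 − α₁)·(1 − α₂'). Then α₂' > 0 and the parameter-update rules satisfy the two constraint identities used in the ASVRG-ADMM analysis: 1/α₂² = (1 − α₂')/(α₂')², and (1 − α₁)/α₂² = α₃'/(α₂')². -/
/-- The parameter-update rules satisfy the two constraint identities used in the
ASVRG-ADMM analysis. -/
theorem stmt_17 (α₁ α₂ : ℝ) (hα₂ : 0 < α₂)
    (α₁' α₂' α₃' : ℝ) (hd2 : α₂' = h α₂) (hd1 : α₁' = α₁ * (1 - α₂'))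
    (hd3 : α₃' = (1 - α₁) * (1 - α₂')) :
    0 < α₂' ∧ 1 / α₂ ^ 2 = (1 - α₂') / α₂' ^ 2 ∧
      (1 - α₁) / α₂ ^ 2 = α₃' / α₂' ^ 2 := by
  set s := Real.sqrt (α₂ ^ 4 + 4 * α₂ ^ 2) with hs
  have harg : (0:ℝ) ≤ α₂ ^ 4 + 4 * α₂ ^ 2 := by positivity
  have hs2 : s ^ 2 = α₂ ^ 4 + 4 * α₂ ^ 2 := Real.sq_sqrt harg
  have hsnn : 0 ≤ s := Real.sqrt_nonneg _
  have hgt : α₂ ^ 2 < s := by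
    nlinarith [sq_nonneg (s - α₂ ^ 2), sq_nonneg α₂, hα₂]
  have hpos : 0 < α₂' := by rw [hd2]; unfold h; linarith
  have hkey : α₂' ^ 2 = α₂ ^ 2 * (1 - α₂') := by
    rw [hd2]; unfold h; rw [← hs]; nlinarith [hs2]
  have h2 : α₂' ≠ 0 := ne_of_gt hpos
  have ha : α₂ ≠ 0 := ne_of_gt hα₂
  refine ⟨hpos, ?_, ?_⟩
  · field_simp
    nlinarith [hkey]
  · rw [hd3]
    field_simp
    rw [hkey]; ring
end

section
/- Define the sequence (α₂,s) for s ≥ 1 by α₂,1 = 2/3 and α₂,s+1 = h(α₂,s). Then for every natural number s ≥ 1, 0 < α₂,s ≤ 2/(s+2). -/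
lemma h_key (a : ℝ) : (h a) ^ 2 + a ^ 2 * (h a) = a ^ 2 := by
  have hs : Real.sqrt (a ^ 4 + 4 * a ^ 2) ^ 2 = a ^ 4 + 4 * a ^ 2 :=
    Real.sq_sqrt (by positivity)
  unfold h
  nlinarith [hs]

lemma h_pos (a : ℝ) (ha : 0 < a) : 0 < h a := by
  have : (a ^ 2) < Real.sqrt (a ^ 4 + 4 * a ^ 2) := by
    rw [show a ^ 4 + 4 * a ^ 2 = (a ^ 2) ^ 2 + 4 * a ^ 2 by ring]
    nlinarith [Real.sq_sqrt (show (0:ℝ) ≤ (a ^ 2) ^ 2 + 4 * a ^ 2 by positivity),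
      Real.sqrt_nonneg ((a ^ 2) ^ 2 + 4 * a ^ 2), sq_nonneg a, ha]
  unfold h
  linarith

/-- If `α₂,1 = 2/3` and `α₂,s+1 = h(α₂,s)`, then `0 < α₂,s ≤ 2/(s+2)` for all `s ≥ 1`. -/
theorem stmt_18 (α : ℕ → ℝ) (h1 : α 1 = 2 / 3)
    (hrec : ∀ s : ℕ, 1 ≤ s → α (s + 1) = h (α s)) :
    ∀ s : ℕ, 1 ≤ s → 0 < α s ∧ α s ≤ 2 / ((s : ℝ) + 2) := by
  intro s hs
  induction s, hs using Nat.le_induction with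
  | base => rw [h1]; norm_num
  | succ n hn ih =>
    obtain ⟨hpos, hle⟩ := ih
    rw [hrec n hn]
    set a := α n with ha
    have hx := h_pos a hpos
    have hk := h_key a
    refine ⟨hx, ?_⟩
    have hn0 : (0:ℝ) ≤ (n:ℝ) := Nat.cast_nonneg n
    have hle' : a * ((n:ℝ) + 2) ≤ 2 := by
      rw [le_div_iff₀ (by linarith : (0:ℝ) < (n:ℝ) + 2)] at hle
      linarith
    have h4 : a ^ 2 * ((n:ℝ) + 2) ^ 2 ≤ 4 := by
      have := mul_le_mul hle' hle' (by positivity) (by norm_num)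
      nlinarith [this]
    push_cast
    rw [le_div_iff₀ (by linarith : (0:ℝ) < (n:ℝ) + 1 + 2)]
    set X := h a * ((n:ℝ) + 1 + 2) with hX
    have hX2 : X ^ 2 + a ^ 2 * ((n:ℝ) + 3) * X = a ^ 2 * ((n:ℝ) + 3) ^ 2 := by
      rw [hX]; linear_combination ((n:ℝ) + 3) ^ 2 * hk
    have hXpos : 0 < X := by positivity
    by_contra hc
    push_neg at hc
    have h3 : (0:ℝ) < (n:ℝ) + 3 := by linarith
    nlinarith [hX2, h4, hc, hXpos, hn0, mul_pos (sub_pos.mpr hc) hXpos,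
      mul_pos (sub_pos.mpr hc) (mul_pos (pow_pos hpos 2) h3), pow_pos hpos 2]
end
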